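/- Let (X₁, Γ₁, Φ₁) and (X₂, Γ₂, Φ₂) be minimal equicontinuous Cantor actions which are return equivalent, and suppose that the discriminant groups D(Φ₁,x₁) and D(Φ₂,x₂) are trivial for basepoints x₁ ∈ X₁ and x₂ ∈ X₂. Then the Steinitz orders Π[G(Φ₁)] and Π[G(Φ₂)] are asymptotically equivalent. -/

import Mathlib

noncomputable section

open Set Topology

/-! ### The group of homeomorphisms -/

namespace Homeomorph

variable {X : Type*} [TopologicalSpace X]

instance instGroup' : Group (X ≃ₜ X) where
  mul f g := g.trans f
  one := Homeomorph.refl X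
  inv := Homeomorph.symm
  mul_assoc f g h := rfl
  one_mul f := rfl
  mul_one f := rfl
  inv_mul_cancel f := Homeomorph.ext fun x => f.symm_apply_apply x

@[simp] theorem mul_apply' (f g : X ≃ₜ X) (x : X) : (f * g) x = f (g x) := rfl
@[simp] theorem one_apply' (x : X) : (1 : X ≃ₜ X) x = x := rfl
@[simp] theorem inv_eq_symm (f : X ≃ₜ X) : f⁻¹ = f.symm := rfl

/-- The uniform topology (topology of uniform convergence, equivalently for a compact
metric space the compact-open topology) on the group of homeomorphisms of a compact
metric space, as the metric topology of the sup-metric. -/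
instance instMetricSpaceHomeomorph {Y : Type*} [MetricSpace Y] [CompactSpace Y] :
    MetricSpace (Y ≃ₜ Y) :=
  MetricSpace.induced (fun h => (⟨h, h.continuous⟩ : C(Y, Y)))
    (fun f g hfg => Homeomorph.ext fun x => congrFun (congrArg ContinuousMap.toFun hfg) x)
    inferInstance

end Homeomorph

namespace Homeomorph

variable {Y : Type*} [MetricSpace Y] [CompactSpace Y]

theorem dist_eq_contMap (f g : Y ≃ₜ Y) :
    dist f g = dist (⟨f, f.continuous⟩ : C(Y, Y)) (⟨g, g.continuous⟩ : C(Y, Y)) := rfl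

theorem dist_apply_le (f g : Y ≃ₜ Y) (x : Y) : dist (f x) (g x) ≤ dist f g :=
  ContinuousMap.dist_apply_le_dist (f := (⟨f, f.continuous⟩ : C(Y, Y)))
    (g := (⟨g, g.continuous⟩ : C(Y, Y))) x

theorem dist_lt_iff' (f g : Y ≃ₜ Y) {C : ℝ} (hC : 0 < C) :
    dist f g < C ↔ ∀ x : Y, dist (f x) (g x) < C := by
  rw [dist_eq_contMap, ContinuousMap.dist_lt_iff hC]
  rfl

instance : IsTopologicalGroup (Y ≃ₜ Y) where
  continuous_mul := by
    rw [Metric.continuous_iff]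
    rintro ⟨f₀, g₀⟩ ε hε
    obtain ⟨δ₁, hδ₁, H₁⟩ := Metric.uniformContinuous_iff.mp
      (CompactSpace.uniformContinuous_of_continuous f₀.continuous) (ε / 2) (by positivity)
    refine ⟨min δ₁ (ε / 2), by positivity, ?_⟩
    rintro ⟨f, g⟩ hd
    have hdf : dist f f₀ < ε / 2 := by
      have h' : dist f f₀ ≤ dist ((f, g)) ((f₀, g₀)) := by
        rw [Prod.dist_eq]; exact le_max_left _ _
      exact (h'.trans_lt hd).trans_le (min_le_right _ _)
    have hdg : dist g g₀ < δ₁ := by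
      have h' : dist g g₀ ≤ dist ((f, g)) ((f₀, g₀)) := by
        rw [Prod.dist_eq]; exact le_max_right _ _
      exact (h'.trans_lt hd).trans_le (min_le_left _ _)
    rw [dist_lt_iff' _ _ hε]
    intro x
    have h1 : dist (f (g x)) (f₀ (g x)) < ε / 2 :=
      lt_of_le_of_lt (dist_apply_le f f₀ (g x)) hdf
    have h2 : dist (f₀ (g x)) (f₀ (g₀ x)) < ε / 2 :=
      H₁ (lt_of_le_of_lt (dist_apply_le g g₀ x) hdg)
    calc dist ((f * g) x) ((f₀ * g₀) x) ≤ dist (f (g x)) (f₀ (g x)) + dist (f₀ (g x)) (f₀ (g₀ x)) :=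
          dist_triangle _ _ _
      _ < ε / 2 + ε / 2 := by exact add_lt_add h1 h2
      _ = ε := by ring
  continuous_inv := by
    rw [Metric.continuous_iff]
    intro f₀ ε hε
    obtain ⟨δ, hδ, H⟩ := Metric.uniformContinuous_iff.mp
      (CompactSpace.uniformContinuous_of_continuous f₀.symm.continuous) ε hε
    refine ⟨δ, hδ, ?_⟩
    intro g hdg
    rw [dist_lt_iff' _ _ hε]
    intro y
    have key : dist (g (g.symm y)) (f₀ (g.symm y)) < δ :=
      lt_of_le_of_lt (dist_apply_le g f₀ (g.symm y)) hdg
    have h2 := H key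
    have h3 : dist (f₀.symm (g (g.symm y))) (f₀.symm (f₀ (g.symm y))) < ε := h2
    rw [Homeomorph.apply_symm_apply, Homeomorph.symm_apply_apply] at h3
    rw [dist_comm] at h3
    simpa using h3
end Homeomorph

/-! ### Steinitz (supernatural) numbers -/

/-- A Steinitz number: a formal product of primes with exponents in `ℕ∞`. -/
def SteinitzNum : Type := Nat.Primes → ℕ∞

namespace SteinitzNum

/-- The Steinitz number associated to a natural number. -/
def ofNat (n : ℕ) : SteinitzNum := fun p => (n.factorization (p : ℕ) : ℕ∞)

/-- Multiplication of Steinitz numbers adds the exponents at each prime. -/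
instance : Mul SteinitzNum := ⟨fun a b p => a p + b p⟩

/-- The least common multiple of a collection of positive integers, as a Steinitz number:
its exponent at `p` is the supremum of the `p`-adic valuations of the elements. -/
def lcmSet (S : Set ℕ) : SteinitzNum := fun p => ⨆ n ∈ S, (n.factorization (p : ℕ) : ℕ∞)

/-- Two Steinitz numbers are asymptotically equivalent if they agree after multiplication
by positive integers. -/
def AsympEquiv (a b : SteinitzNum) : Prop :=
  ∃ n₀ m₀ : ℕ, 0 < n₀ ∧ 0 < m₀ ∧ ofNat n₀ * a = ofNat m₀ * b

/-- The prime spectrum of a Steinitz number: primes with nonzero exponent. -/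
def primeSpectrum (a : SteinitzNum) : Set Nat.Primes := { p | a p ≠ 0 }

/-- The finite prime spectrum: primes with finite nonzero exponent. -/
def finitePrimeSpectrum (a : SteinitzNum) : Set Nat.Primes := { p | a p ≠ 0 ∧ a p ≠ ⊤ }

/-- The infinite prime spectrum: primes with infinite exponent. -/
def infinitePrimeSpectrum (a : SteinitzNum) : Set Nat.Primes := { p | a p = ⊤ }

end SteinitzNum

/-! ### Steinitz orders for topological groups -/

/-- The Steinitz order of a topological group: the LCM of the orders of the finite
quotients `G/N` over open normal subgroups `N ⊆ G`. -/
def steinitzOrder (G : Type*) [Group G] [TopologicalSpace G] : SteinitzNum :=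
  SteinitzNum.lcmSet
    { n | ∃ N : Subgroup G, N.Normal ∧ IsOpen (N : Set G) ∧ n = Nat.card (G ⧸ N) }

/-- The Steinitz order of a subgroup `D` of a topological group `G`: the LCM of the
cardinalities `|D/(N ∩ D)|` over open normal subgroups `N ⊆ G`. -/
def steinitzOrderOfSubgroup {G : Type*} [Group G] [TopologicalSpace G] (D : Subgroup G) :
    SteinitzNum :=
  SteinitzNum.lcmSet
    { n | ∃ N : Subgroup G, N.Normal ∧ IsOpen (N : Set G) ∧
        n = Nat.card (↥D ⧸ (N.subgroupOf D)) }

/-- The relative Steinitz order of a subgroup `D` of a topological group `G`: the LCM of the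
cardinalities `|G/(N · D)|` over open normal subgroups `N ⊆ G`. -/
def steinitzRelativeOrder {G : Type*} [Group G] [TopologicalSpace G] (D : Subgroup G) :
    SteinitzNum :=
  SteinitzNum.lcmSet
    { n | ∃ N : Subgroup G, N.Normal ∧ IsOpen (N : Set G) ∧ n = Nat.card (G ⧸ (N ⊔ D)) }

/-- A profinite (compact Hausdorff totally disconnected) topological group is topologically
Noetherian if every increasing chain of closed subgroups has a maximal element. -/
def TopologicallyNoetherian (G : Type*) [Group G] [TopologicalSpace G] : Prop :=
  ∀ c : ℕ → Subgroup G, (∀ i, IsClosed (c i : Set G)) → Monotone c → ∃ i₀, ∀ i, c i ≤ c i₀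

/-! ### Cantor actions -/

section CantorActions

variable {X : Type*} [MetricSpace X] {Γ : Type*} [Group Γ]

/-- An action is minimal if every orbit is dense. -/
def IsMinimalAction (Φ : Γ →* (X ≃ₜ X)) : Prop :=
  ∀ x : X, Dense (Set.range fun g : Γ => Φ g x)

/-- An action is equicontinuous if it satisfies the uniform `ε`-`δ` condition with respect
to the metric. -/
def IsEquicontinuousAction (Φ : Γ →* (X ≃ₜ X)) : Prop :=
  ∀ ε : ℝ, 0 < ε → ∃ δ : ℝ, 0 < δ ∧
    ∀ x y : X, dist x y < δ → ∀ g : Γ, dist (Φ g x) (Φ g y) < ε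

variable [CompactSpace X]

/-- `G(Φ)`: the closure of the image of `Γ` in `Homeo(X)`, in the uniform topology. -/
def profiniteClosure (Φ : Γ →* (X ≃ₜ X)) : Subgroup (X ≃ₜ X) :=
  Φ.range.topologicalClosure

/-- The discriminant group: the isotropy subgroup of `G(Φ)` at `x`. -/
def discriminant (Φ : Γ →* (X ≃ₜ X)) (x : X) : Subgroup (profiniteClosure Φ) where
  carrier := { h | (h : X ≃ₜ X) x = x }
  one_mem' := rfl
  mul_mem' := by
    intro a b ha hb
    simp only [Set.mem_setOf_eq] at *
    show ((a : X ≃ₜ X) * (b : X ≃ₜ X)) x = x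
    rw [Homeomorph.mul_apply', hb, ha]
  inv_mem' := by
    intro a ha
    simp only [Set.mem_setOf_eq] at *
    show ((a : X ≃ₜ X)⁻¹) x = x
    rw [Homeomorph.inv_eq_symm]
    conv_lhs => rw [← ha]
    exact Homeomorph.symm_apply_apply _ _

/-- The Steinitz order `Π[G(Φ)]` of a Cantor action. -/
def steinitzOrderAction (Φ : Γ →* (X ≃ₜ X)) : SteinitzNum :=
  steinitzOrder ↥(profiniteClosure Φ)

/-- The Steinitz order `Π[D(Φ,x)]` of the discriminant of a Cantor action. -/
def steinitzOrderDisc (Φ : Γ →* (X ≃ₜ X)) (x : X) : SteinitzNum :=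
  steinitzOrderOfSubgroup (discriminant Φ x)

/-- The relative Steinitz order `Π[G(Φ) : D(Φ,x)]` of a Cantor action. -/
def steinitzOrderRel (Φ : Γ →* (X ≃ₜ X)) (x : X) : SteinitzNum :=
  steinitzRelativeOrder (discriminant Φ x)

end CantorActions

/-! ### Adapted sets, holonomy and return equivalence -/

section Adapted

variable {X : Type*} [MetricSpace X] {Γ : Type*} [Group Γ]

/-- A nonempty clopen subset `U ⊆ X` is adapted to the action `Φ` if every group element
either fixes `U` or moves it entirely off of itself. -/
def IsAdaptedSet (Φ : Γ →* (X ≃ₜ X)) (U : Set X) : Prop :=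
  U.Nonempty ∧ IsClopen U ∧ ∀ g : Γ, ((Φ g) '' U ∩ U).Nonempty → (Φ g) '' U = U

/-- The stabilizer subgroup `Γ_U` of an adapted set. -/
def adaptedStabilizer (Φ : Γ →* (X ≃ₜ X)) (U : Set X) : Subgroup Γ where
  carrier := { g | (Φ g) '' U = U }
  one_mem' := by
    show ⇑(Φ 1) '' U = U
    rw [map_one]; exact Set.image_id U
  mul_mem' := by
    intro a b ha hb
    simp only [Set.mem_setOf_eq] at *
    rw [map_mul]
    show ((Φ a) * (Φ b)) '' U = U
    have : (((Φ a) * (Φ b) : X ≃ₜ X) : X → X) = (Φ a) ∘ (Φ b) := rfl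
    rw [this, Set.image_comp, hb, ha]
  inv_mem' := by
    intro a ha
    simp only [Set.mem_setOf_eq] at *
    rw [map_inv, Homeomorph.inv_eq_symm]
    conv_lhs => rw [← ha]
    rw [← Set.image_comp]
    simp

/-- The homeomorphism of an invariant set induced by a homeomorphism of `X`. -/
def restrictHomeo (h : X ≃ₜ X) {U : Set X} (hU : h '' U = U) : U ≃ₜ U :=
  (h.image U).trans (Homeomorph.setCongr hU)

@[simp] theorem restrictHomeo_coe (h : X ≃ₜ X) {U : Set X} (hU : h '' U = U) (x : U) :
    (restrictHomeo h hU x : X) = h x := rfl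

/-- The holonomy homomorphism of an adapted set: restriction of the stabilizer to `U`. -/
def holonomyHom (Φ : Γ →* (X ≃ₜ X)) (U : Set X) :
    adaptedStabilizer Φ U →* (↥U ≃ₜ ↥U) where
  toFun g := restrictHomeo (Φ (g : Γ)) g.2
  map_one' := by
    ext x
    show ((restrictHomeo (Φ ((1 : adaptedStabilizer Φ U) : Γ)) _ x : X) = _)
    simp
  map_mul' := by
    intro a b
    ext x
    show ((restrictHomeo (Φ ((a * b : adaptedStabilizer Φ U) : Γ)) _ x : X) = _)
    simp only [restrictHomeo_coe, Subgroup.coe_mul, map_mul]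
    rfl

/-- The holonomy group `H_U` of an adapted set: the image of the stabilizer in `Homeo(U)`. -/
def holonomyGroup (Φ : Γ →* (X ≃ₜ X)) (U : Set X) : Subgroup (↥U ≃ₜ ↥U) :=
  (holonomyHom Φ U).range

end Adapted

/-- Two Cantor actions are return equivalent if they admit adapted sets whose holonomy
actions are isomorphic, via a homeomorphism between the adapted sets together with a
compatible isomorphism of the holonomy groups. -/
def ReturnEquivalent
    {X₁ : Type*} [MetricSpace X₁] {Γ₁ : Type*} [Group Γ₁]
    {X₂ : Type*} [MetricSpace X₂] {Γ₂ : Type*} [Group Γ₂]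
    (Φ₁ : Γ₁ →* (X₁ ≃ₜ X₁)) (Φ₂ : Γ₂ →* (X₂ ≃ₜ X₂)) : Prop :=
  ∃ (U₁ : Set X₁) (U₂ : Set X₂), IsAdaptedSet Φ₁ U₁ ∧ IsAdaptedSet Φ₂ U₂ ∧
    ∃ (h : ↥U₁ ≃ₜ ↥U₂) (θ : holonomyGroup Φ₁ U₁ ≃* holonomyGroup Φ₂ U₂),
      ∀ k : holonomyGroup Φ₁ U₁,
        ((θ k : ↥U₂ ≃ₜ ↥U₂)) = h.symm.trans (((k : ↥U₁ ≃ₜ ↥U₁)).trans h)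

section Regularity

variable {X : Type*} [MetricSpace X]

/-- An action of a group `H` on `X` through a homomorphism `ρ : H →* Homeo(X)` is locally
quasi-analytic if there is `ε > 0` so that for every nonempty open `U` of diameter less
than `ε`, any element acting as the identity on a nonempty open subset `V ⊆ U` with
`ρ g (V) = V` acts as the identity on all of `U`. -/
def IsLocallyQuasiAnalytic {H : Type*} [Group H] (ρ : H →* (X ≃ₜ X)) : Prop :=
  ∃ ε : ℝ, 0 < ε ∧ ∀ U : Set X, IsOpen U → U.Nonempty → Metric.diam U < ε →
    ∀ V : Set X, V ⊆ U → IsOpen V → V.Nonempty →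
      ∀ g : H, (ρ g) '' V = V → (∀ x ∈ V, ρ g x = x) → ∀ x ∈ U, ρ g x = x

variable [CompactSpace X] {Γ : Type*} [Group Γ]

/-- A Cantor action is stable if the induced action of `G(Φ)` on `X` is locally
quasi-analytic; otherwise it is wild. -/
def IsStableAction (Φ : Γ →* (X ≃ₜ X)) : Prop :=
  IsLocallyQuasiAnalytic (profiniteClosure Φ).subtype

/-- An action is topologically free if the set of points fixed by some nontrivial group
element is meagre. -/
def IsTopologicallyFree (Φ : Γ →* (X ≃ₜ X)) : Prop :=
  IsMeagre { x : X | ∃ g : Γ, g ≠ 1 ∧ Φ g x = x }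

end Regularity


/-! ### Auxiliary lemmas for the main theorem -/

section SteinitzAux

open SteinitzNum

/-- The defining set of the Steinitz order. -/
def steinitzSet (G : Type*) [Group G] [TopologicalSpace G] : Set ℕ :=
  { n | ∃ N : Subgroup G, N.Normal ∧ IsOpen (N : Set G) ∧ n = Nat.card (G ⧸ N) }

theorem steinitzOrder_eq_lcm (G : Type*) [Group G] [TopologicalSpace G] :
    steinitzOrder G = SteinitzNum.lcmSet (steinitzSet G) := rfl

theorem one_mem_steinitzSet (G : Type*) [Group G] [TopologicalSpace G] :
    (1 : ℕ) ∈ steinitzSet G := by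
  refine ⟨⊤, inferInstance, by simp, ?_⟩
  have : Subsingleton (G ⧸ (⊤ : Subgroup G)) := QuotientGroup.subsingleton_quotient_top
  simp [Nat.card_eq_one_iff_unique]

theorem steinitzSet_subset_of_mulEquiv {G G' : Type*} [Group G] [TopologicalSpace G]
    [Group G'] [TopologicalSpace G'] (e : G ≃* G') (hc' : Continuous e.symm) :
    steinitzSet G ⊆ steinitzSet G' := by
  rintro n ⟨N, hN, hO, rfl⟩
  haveI := hN
  haveI : (N.map (e : G →* G')).Normal := hN.map _ e.surjective
  refine ⟨N.map (e : G →* G'), this, ?_, ?_⟩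
  · have : ((N.map (e : G →* G') : Subgroup G') : Set G') = e.symm ⁻¹' (N : Set G) := by
      ext y
      simp only [Subgroup.coe_map, Set.mem_image, Set.mem_preimage, SetLike.mem_coe]
      constructor
      · rintro ⟨x, hx, rfl⟩; simpa using hx
      · intro hy; exact ⟨e.symm y, hy, by simp⟩
    rw [this]
    exact hO.preimage hc'
  · exact Nat.card_congr (QuotientGroup.congr N (N.map (e : G →* G')) e rfl).toEquiv

theorem steinitzOrder_congr_of_mulEquiv {G G' : Type*} [Group G] [TopologicalSpace G]
    [Group G'] [TopologicalSpace G'] (e : G ≃* G') (hc : Continuous e)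
    (hc' : Continuous e.symm) : steinitzOrder G = steinitzOrder G' := by
  rw [steinitzOrder_eq_lcm, steinitzOrder_eq_lcm]
  have hset : steinitzSet G = steinitzSet G' :=
    Set.Subset.antisymm (steinitzSet_subset_of_mulEquiv e hc')
      (steinitzSet_subset_of_mulEquiv e.symm (by simpa using hc))
  rw [hset]

theorem steinitzOrder_eq_index_mul_of_isOpen {G : Type*} [Group G] [TopologicalSpace G]
    [IsTopologicalGroup G] (H : Subgroup G) (hO : IsOpen (H : Set G)) (hfin : H.FiniteIndex) :
    steinitzOrder G = SteinitzNum.ofNat H.index * steinitzOrder ↥H := by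
  haveI := hfin
  have hd0 : H.index ≠ 0 := hfin.index_ne_zero
  have hHcl : IsClosed (H : Set G) := H.isClosed_of_isOpen hO
  funext p
  have hne : (steinitzSet ↥H).Nonempty := ⟨1, one_mem_steinitzSet ↥H⟩
  show (⨆ n ∈ steinitzSet G, ((n.factorization (p : ℕ) : ℕ∞))) =
    ((H.index.factorization (p : ℕ) : ℕ∞)) +
      ⨆ n ∈ steinitzSet ↥H, ((n.factorization (p : ℕ) : ℕ∞))
  rw [ENat.add_biSup hne]
  apply le_antisymm
  · -- each |G/N| divides relindex * index
    refine iSup₂_le ?_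
    rintro n ⟨N, hN, hNO, rfl⟩
    haveI := hN
    by_cases hn0 : Nat.card (G ⧸ N) = 0
    · simp [hn0]
    -- the induced subgroup of H
    set M : Subgroup ↥H := N.subgroupOf H with hM
    have hMmem : Nat.card (↥H ⧸ M) ∈ steinitzSet ↥H := by
      refine ⟨M, hN.subgroupOf H, ?_, rfl⟩
      have : (M : Set ↥H) = (Subtype.val : ↥H → G) ⁻¹' (N : Set G) := rfl
      rw [this]
      exact hNO.preimage continuous_subtype_val
    have key : Nat.card (G ⧸ N) ∣ N.relIndex H * H.index := by
      have h1 : N.relIndex (H ⊔ N) * (H ⊔ N).index = N.index :=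
        Subgroup.relIndex_mul_index le_sup_right
      have h2 : N.relIndex (H ⊔ N) = N.relIndex H := Subgroup.relIndex_sup_right H N
      have h3 : (H ⊔ N).index ∣ H.index := Subgroup.index_dvd_of_le le_sup_left
      have : N.index = N.relIndex H * (H ⊔ N).index := by rw [← h1, h2]
      show N.index ∣ _
      rw [this]
      exact mul_dvd_mul_left _ h3
    have hrel : N.relIndex H = Nat.card (↥H ⧸ M) := rfl
    have hrel0 : N.relIndex H ≠ 0 := by
      intro h0
      apply hn0
      show N.index = 0
      have h1 : N.relIndex (H ⊔ N) * (H ⊔ N).index = N.index :=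
        Subgroup.relIndex_mul_index le_sup_right
      have h2 : N.relIndex (H ⊔ N) = N.relIndex H := Subgroup.relIndex_sup_right H N
      rw [← h1, h2, h0, zero_mul]
    have hdvd : Nat.card (G ⧸ N) ∣ H.index * Nat.card (↥H ⧸ M) := by
      rw [mul_comm, ← hrel]; exact key
    have hfact : (Nat.card (G ⧸ N)).factorization (p : ℕ) ≤
        (H.index * Nat.card (↥H ⧸ M)).factorization (p : ℕ) := by
      have := (Nat.factorization_le_iff_dvd hn0 (by
        rw [← hrel] at *
        exact mul_ne_zero hd0 hrel0)).mpr hdvd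
      exact this (p : ℕ)
    rw [Nat.factorization_mul hd0 (hrel ▸ hrel0)] at hfact
    calc ((Nat.card (G ⧸ N)).factorization (p : ℕ) : ℕ∞)
        ≤ ((H.index.factorization (p : ℕ) + (Nat.card (↥H ⧸ M)).factorization (p : ℕ) : ℕ) : ℕ∞) := by
          exact_mod_cast hfact
      _ = (H.index.factorization (p : ℕ) : ℕ∞) + ((Nat.card (↥H ⧸ M)).factorization (p : ℕ) : ℕ∞) := by
          push_cast; ring
      _ ≤ ⨆ n ∈ steinitzSet ↥H, ((H.index.factorization (p : ℕ) : ℕ∞) + (n.factorization (p : ℕ) : ℕ∞)) :=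
          le_biSup (fun n => (H.index.factorization (p : ℕ) : ℕ∞) + (n.factorization (p : ℕ) : ℕ∞)) hMmem
  · refine iSup_le fun m => iSup_le fun hm => ?_
    obtain ⟨M, hM, hMO, rfl⟩ := hm
    by_cases hm0 : Nat.card (↥H ⧸ M) = 0
    · -- use the normal core of H itself
      rw [hm0]
      set N : Subgroup G := H.normalCore with hNdef
      haveI : N.FiniteIndex := Subgroup.finiteIndex_normalCore H
      have hNO : IsOpen (N : Set G) :=
        Subgroup.isOpen_of_isClosed_of_finiteIndex _ (H.normalCore_isClosed hHcl)
      have hNmem : Nat.card (G ⧸ N) ∈ steinitzSet G := ⟨N, H.normalCore_normal, hNO, rfl⟩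
      have hdvd : H.index ∣ N.index := Subgroup.index_dvd_of_le H.normalCore_le
      have hN0 : N.index ≠ 0 := Subgroup.FiniteIndex.index_ne_zero
      have hfact := (Nat.factorization_le_iff_dvd hd0 hN0).mpr hdvd (p : ℕ)
      have hcard : Nat.card (G ⧸ N) = N.index := rfl
      calc ((H.index.factorization (p : ℕ) : ℕ∞)) + (((0 : ℕ).factorization (p : ℕ) : ℕ∞))
          = ((H.index.factorization (p : ℕ) : ℕ∞)) := by simp
        _ ≤ ((Nat.card (G ⧸ N)).factorization (p : ℕ) : ℕ∞) := by
            rw [hcard]; exact_mod_cast hfact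
        _ ≤ ⨆ n ∈ steinitzSet G, ((n.factorization (p : ℕ) : ℕ∞)) :=
            le_biSup (fun n => ((n.factorization (p : ℕ) : ℕ∞))) hNmem
    · -- push M into G and take its normal core
      set M' : Subgroup G := M.map H.subtype with hM'def
      have hM'le : M' ≤ H := Subgroup.map_subtype_le M
      have hM'sub : M'.subgroupOf H = M :=
        Subgroup.comap_map_eq_self_of_injective H.subtype_injective M
      have hrel : M'.relIndex H = Nat.card (↥H ⧸ M) := by
        show (M'.subgroupOf H).index = _
        rw [hM'sub]; rfl
      have hM'idx : M'.relIndex H * H.index = M'.index :=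
        Subgroup.relIndex_mul_index hM'le
      have hM'0 : M'.index ≠ 0 := by
        rw [← hM'idx, hrel]
        exact mul_ne_zero hm0 hd0
      have hM'O : IsOpen (M' : Set G) := by
        have : (M' : Set G) = (Subtype.val : ↥H → G) '' (M : Set ↥H) := Subgroup.coe_map _ _
        rw [this]
        exact hO.isOpenMap_subtype_val _ hMO
      haveI : M'.FiniteIndex := ⟨hM'0⟩
      set N : Subgroup G := M'.normalCore with hNdef
      haveI : N.FiniteIndex := Subgroup.finiteIndex_normalCore M'
      have hNO : IsOpen (N : Set G) :=
        Subgroup.isOpen_of_isClosed_of_finiteIndex _ (M'.normalCore_isClosed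
          (M'.isClosed_of_isOpen hM'O))
      have hNmem : Nat.card (G ⧸ N) ∈ steinitzSet G := ⟨N, M'.normalCore_normal, hNO, rfl⟩
      have hdvd : M'.index ∣ N.index := Subgroup.index_dvd_of_le M'.normalCore_le
      have hN0 : N.index ≠ 0 := Subgroup.FiniteIndex.index_ne_zero
      have hfact := (Nat.factorization_le_iff_dvd hM'0 hN0).mpr hdvd (p : ℕ)
      have hsplit : M'.index.factorization (p : ℕ) =
          (Nat.card (↥H ⧸ M)).factorization (p : ℕ) + H.index.factorization (p : ℕ) := by
        rw [← hM'idx, hrel, Nat.factorization_mul hm0 hd0]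
        rfl
      have hcard : Nat.card (G ⧸ N) = N.index := rfl
      calc ((H.index.factorization (p : ℕ) : ℕ∞)) + (((Nat.card (↥H ⧸ M)).factorization (p : ℕ) : ℕ∞))
          = ((M'.index.factorization (p : ℕ) : ℕ∞)) := by
            rw [hsplit]; push_cast; ring
        _ ≤ ((Nat.card (G ⧸ N)).factorization (p : ℕ) : ℕ∞) := by
            rw [hcard]; exact_mod_cast hfact
        _ ≤ ⨆ n ∈ steinitzSet G, ((n.factorization (p : ℕ) : ℕ∞)) :=
            le_biSup (fun n => ((n.factorization (p : ℕ) : ℕ∞))) hNmem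


section HomeoCompact

variable {X : Type*} [MetricSpace X] [CompactSpace X]

/-- The natural inclusion of homeomorphisms into continuous maps. -/
def toC : (X ≃ₜ X) → C(X, X) := fun h => ⟨h, h.continuous⟩

theorem toC_isometry : Isometry (toC (X := X)) :=
  Isometry.of_dist_eq fun _ _ => rfl

@[simp] theorem toC_apply (h : X ≃ₜ X) (x : X) : toC h x = h x := rfl

variable {Γ : Type*} [Group Γ]

theorem toC_Phi_mem (Φ : Γ →* (X ≃ₜ X)) (g : Γ) :
    toC (Φ g) ∈ toC '' (Φ.range : Set (X ≃ₜ X)) :=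
  ⟨Φ g, ⟨g, rfl⟩, rfl⟩

/-- Any uniform limit of elements of an equicontinuous group action is a homeomorphism. -/
theorem exists_homeomorph_of_mem_closure (Φ : Γ →* (X ≃ₜ X))
    (heqc : IsEquicontinuousAction Φ) {f : C(X, X)}
    (hf : f ∈ closure (toC '' (Φ.range : Set (X ≃ₜ X)))) :
    ∃ h : X ≃ₜ X, toC h = f := by
  have happrox : ∀ ε : ℝ, 0 < ε → ∃ γ : Γ, dist f (toC (Φ γ)) < ε := by
    intro ε hε
    obtain ⟨b, hb, hfb⟩ := Metric.mem_closure_iff.mp hf ε hε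
    obtain ⟨u, hu, rfl⟩ := hb
    obtain ⟨γ, rfl⟩ := hu
    exact ⟨γ, hfb⟩
  have hinv : ∀ (γ : Γ) (x : X), Φ γ⁻¹ (Φ γ x) = x := by
    intro γ x
    rw [map_inv, Homeomorph.inv_eq_symm]
    exact Homeomorph.symm_apply_apply _ _
  have hinj : Function.Injective f := by
    intro x y hxy
    by_contra hne
    have hd : 0 < dist x y := dist_pos.mpr hne
    obtain ⟨δ, hδ, hδ'⟩ := heqc (dist x y) hd
    obtain ⟨γ, hγ⟩ := happrox (δ / 2) (by positivity)
    have h1 : dist (Φ γ x) (Φ γ y) < δ := by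
      have e1 : dist (f x) (toC (Φ γ) x) ≤ dist f (toC (Φ γ)) :=
        ContinuousMap.dist_apply_le_dist x
      have e2 : dist (f y) (toC (Φ γ) y) ≤ dist f (toC (Φ γ)) :=
        ContinuousMap.dist_apply_le_dist y
      have e1' : dist (f x) (Φ γ x) < δ / 2 := lt_of_le_of_lt e1 hγ
      have e2' : dist (f y) (Φ γ y) < δ / 2 := lt_of_le_of_lt e2 hγ
      rw [hxy] at e1'
      calc dist (Φ γ x) (Φ γ y) ≤ dist (Φ γ x) (f y) + dist (f y) (Φ γ y) := dist_triangle _ _ _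
        _ < δ / 2 + δ / 2 := add_lt_add (by rw [dist_comm]; exact e1') e2'
        _ = δ := by ring
    have h2 := hδ' _ _ h1 γ⁻¹
    rw [hinv, hinv] at h2
    exact lt_irrefl _ h2
  have hsurj : Function.Surjective f := by
    intro y
    have : ∀ n : ℕ, ∃ γ : Γ, dist f (toC (Φ γ)) < 1 / (n + 1) := fun n =>
      happrox _ (by positivity)
    choose γs hγs using this
    set xs : ℕ → X := fun n => (Φ (γs n)).symm y with hxs
    obtain ⟨x, -, φ, hφ, hconv⟩ :=
      isCompact_univ.tendsto_subseq (fun n => Set.mem_univ (xs n))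
    refine ⟨x, ?_⟩
    have h1 : Filter.Tendsto (fun k => f (xs (φ k))) Filter.atTop (nhds (f x)) :=
      (f.continuous.tendsto x).comp hconv
    have h2 : ∀ k, dist (f (xs (φ k))) y ≤ 1 / (k + 1) := by
      intro k
      have e1 : dist (f (xs (φ k))) (toC (Φ (γs (φ k))) (xs (φ k))) ≤ dist f (toC (Φ (γs (φ k)))) :=
        ContinuousMap.dist_apply_le_dist _
      have e2 : toC (Φ (γs (φ k))) (xs (φ k)) = y := Homeomorph.apply_symm_apply _ _
      rw [e2] at e1
      refine le_trans (le_of_lt (lt_of_le_of_lt e1 (hγs (φ k)))) ?_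
      have hk0 : k ≤ φ k := hφ.le_apply
      have hk : (k : ℝ) + 1 ≤ (φ k : ℝ) + 1 := by
        have := (Nat.cast_le (α := ℝ)).mpr hk0
        linarith
      apply one_div_le_one_div_of_le (by positivity) hk
    have h3 : Filter.Tendsto (fun k => f (xs (φ k))) Filter.atTop (nhds y) := by
      apply tendsto_iff_dist_tendsto_zero.mpr
      apply squeeze_zero (fun k => dist_nonneg) h2
      exact tendsto_one_div_add_atTop_nhds_zero_nat
    exact tendsto_nhds_unique h1 h3
  let e : X ≃ X := Equiv.ofBijective f ⟨hinj, hsurj⟩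
  have hc : Continuous e := f.continuous
  exact ⟨Continuous.homeoOfEquivCompactToT2 hc, by ext x; rfl⟩

theorem totallyBounded_toC_range (Φ : Γ →* (X ≃ₜ X)) (heqc : IsEquicontinuousAction Φ) :
    TotallyBounded (toC '' (Φ.range : Set (X ≃ₜ X))) := by
  rw [Metric.totallyBounded_iff]
  intro ε hε
  obtain ⟨δ, hδ, hδ'⟩ := heqc (ε / 4) (by positivity)
  have hXc : IsCompact (Set.univ : Set X) := isCompact_univ
  obtain ⟨s, hsfin, hscov⟩ :=
    Metric.totallyBounded_iff.mp hXc.totallyBounded δ hδ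
  haveI : Fintype ↥s := hsfin.fintype
  set S₀ : Set C(X, X) := toC '' (Φ.range : Set (X ≃ₜ X)) with hS₀
  set ev : C(X, X) → (↥s → X) := fun f i => f (i : X) with hev
  have htb : TotallyBounded (ev '' S₀) := by
    have hc : IsCompact (Set.univ : Set (↥s → X)) := isCompact_univ
    exact hc.totallyBounded.subset (Set.subset_univ _)
  obtain ⟨t, hts, htfin, htcov⟩ := Metric.finite_approx_of_totallyBounded htb (ε / 4) (by positivity)
  have hch : ∀ y : ↥s → X, ∃ g : C(X, X), y ∈ t → (g ∈ S₀ ∧ ev g = y) := by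
    intro y
    by_cases hy : y ∈ t
    · obtain ⟨g, hg, hgy⟩ := hts hy
      exact ⟨g, fun _ => ⟨hg, hgy⟩⟩
    · exact ⟨ContinuousMap.id X, fun h => absurd h hy⟩
  choose sel hsel using hch
  refine ⟨sel '' t, htfin.image _, ?_⟩
  intro f hfS
  have hevf : ev f ∈ ev '' S₀ := ⟨f, hfS, rfl⟩
  obtain ⟨y, hyt, hy⟩ := Set.mem_iUnion₂.mp (htcov hevf)
  obtain ⟨hgS, hgy⟩ := hsel y hyt
  rw [Set.mem_iUnion₂]
  refine ⟨sel y, Set.mem_image_of_mem _ hyt, ?_⟩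
  rw [Metric.mem_ball]
  -- extract group elements
  obtain ⟨u, ⟨a, rfl⟩, rfl⟩ := hfS
  obtain ⟨v, ⟨b, hb⟩, hgsel⟩ := hgS
  rw [ContinuousMap.dist_lt_iff hε]
  intro x
  obtain ⟨z, hzs, hz⟩ := Set.mem_iUnion₂.mp (hscov (Set.mem_univ x))
  rw [Metric.mem_ball] at hz
  have hz' : dist x z < δ := hz
  have e1 : dist (toC (Φ a) x) (toC (Φ a) z) < ε / 4 := hδ' x z hz' a
  have e3 : dist (sel y z) (sel y x) < ε / 4 := by
    rw [← hgsel, ← hb]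
    have := hδ' z x (by rwa [dist_comm]) b
    exact this
  have e2 : dist (toC (Φ a) z) (sel y z) < ε / 4 + ε / 4 := by
    have m1 : dist (toC (Φ a) z) (y ⟨z, hzs⟩) ≤ dist (ev (toC (Φ a))) y :=
      dist_le_pi_dist (ev (toC (Φ a))) y ⟨z, hzs⟩
    have m2 : dist (sel y z) (y ⟨z, hzs⟩) ≤ dist (ev (sel y)) y :=
      dist_le_pi_dist (ev (sel y)) y ⟨z, hzs⟩
    have hym : dist (ev (toC (Φ a))) y < ε / 4 := hy
    have hy2 : dist (ev (sel y)) y = 0 := by rw [hgy]; exact dist_self _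
    calc dist (toC (Φ a) z) (sel y z)
        ≤ dist (toC (Φ a) z) (y ⟨z, hzs⟩) + dist (sel y z) (y ⟨z, hzs⟩) :=
          dist_triangle_right _ _ _
      _ < ε / 4 + (0 + ε/4) := by
          apply add_lt_add_of_lt_of_le (lt_of_le_of_lt m1 hym)
          rw [← hy2] at *
          linarith [m2]
      _ = ε / 4 + ε / 4 := by ring
  calc dist (toC (Φ a) x) (sel y x)
      ≤ dist (toC (Φ a) x) (toC (Φ a) z) + dist (toC (Φ a) z) (sel y z)
        + dist (sel y z) (sel y x) := dist_triangle4 _ _ _ _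
    _ < ε / 4 + (ε / 4 + ε / 4) + ε / 4 := by
        apply add_lt_add (add_lt_add e1 e2) e3
    _ = ε := by ring

theorem isCompact_profiniteClosure (Φ : Γ →* (X ≃ₜ X)) (heqc : IsEquicontinuousAction Φ) :
    IsCompact ((profiniteClosure Φ : Set (X ≃ₜ X))) := by
  set A := (Φ.range : Set (X ≃ₜ X)) with hA
  have hK : IsCompact (closure (toC '' A)) :=
    TotallyBounded.isCompact_of_isClosed
      (totallyBounded_toC_range Φ heqc).closure isClosed_closure
  have hsub : closure (toC '' A) ⊆ Set.range toC := by
    intro f hf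
    obtain ⟨h, hh⟩ := exists_homeomorph_of_mem_closure Φ heqc hf
    exact ⟨h, hh⟩
  have hGset : (profiniteClosure Φ : Set (X ≃ₜ X)) = toC ⁻¹' (closure (toC '' A)) := by
    have h1 : (profiniteClosure Φ : Set (X ≃ₜ X)) = closure A :=
      Subgroup.topologicalClosure_coe
    rw [h1]
    exact toC_isometry.isEmbedding.closure_eq_preimage_closure_image A
  rw [hGset]
  rw [toC_isometry.isEmbedding.isCompact_iff]
  rw [Set.image_preimage_eq_of_subset hsub]
  exact hK

end HomeoCompact


section GapAndHelpers

variable {X : Type*} [MetricSpace X]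

theorem Homeomorph.mul_image (f g : X ≃ₜ X) (U : Set X) :
    (f * g) '' U = f '' (g '' U) := by
  rw [← Set.image_comp]; rfl

theorem Homeomorph.one_image (U : Set X) : ((1 : X ≃ₜ X)) '' U = U := by
  have h : ((1 : X ≃ₜ X) : X → X) = id := rfl
  rw [h, Set.image_id]

theorem holonomyHom_apply_coe {Γ : Type*} [Group Γ] (Φ : Γ →* (X ≃ₜ X)) (U : Set X)
    (g : adaptedStabilizer Φ U) (x : ↥U) :
    ((holonomyHom Φ U g x : ↥U) : X) = Φ (g : Γ) x := rfl

variable [CompactSpace X]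

/-- A clopen set has a positive "gap": homeomorphisms that are uniformly closer than the
gap carry `U` to the same set. -/
theorem clopen_gap (U : Set X) (hne : U.Nonempty) (hcl : IsClopen U) :
    ∃ ε₀ : ℝ, 0 < ε₀ ∧ ∀ f g : X ≃ₜ X, (∀ x : X, dist (f x) (g x) < ε₀) →
      g '' U = U → f '' U = U := by
  by_cases huniv : U = Set.univ
  · refine ⟨1, one_pos, fun f g _ _ => ?_⟩
    subst huniv
    rw [Set.image_univ]
    exact f.surjective.range_eq
  · have hUc : (Uᶜ).Nonempty := Set.nonempty_compl.mpr huniv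
    have hUcomp : IsCompact U := hcl.isClosed.isCompact
    have hcont : Continuous fun x : X => Metric.infDist x Uᶜ :=
      Metric.continuous_infDist_pt Uᶜ
    obtain ⟨a, haU, hmin⟩ := hUcomp.exists_isMinOn hne hcont.continuousOn
    have hpos : 0 < Metric.infDist a Uᶜ := by
      rw [← IsClosed.notMem_iff_infDist_pos hcl.compl.isClosed hUc]
      simpa using haU
    refine ⟨Metric.infDist a Uᶜ, hpos, ?_⟩
    intro f g hfg hgU
    have hgUc : g '' Uᶜ = Uᶜ := by
      rw [Set.image_compl_eq g.bijective, hgU]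
    have key : ∀ x ∈ U, f x ∈ U := by
      intro u hu
      by_contra hfu
      have hgu : g u ∈ U := by rw [← hgU]; exact Set.mem_image_of_mem g hu
      have h1 : Metric.infDist (g u) Uᶜ ≤ dist (g u) (f u) :=
        Metric.infDist_le_dist_of_mem hfu
      have h2 : Metric.infDist a Uᶜ ≤ Metric.infDist (g u) Uᶜ := hmin hgu
      have h3 := hfg u
      rw [dist_comm] at h3
      linarith
    have keyc : ∀ x ∈ Uᶜ, f x ∈ Uᶜ := by
      intro u hu
      by_contra hfu
      have hfuU : f u ∈ U := Set.notMem_compl_iff.mp hfu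
      have hgu : g u ∈ Uᶜ := by rw [← hgUc]; exact Set.mem_image_of_mem g hu
      have h1 : Metric.infDist (f u) Uᶜ ≤ dist (f u) (g u) :=
        Metric.infDist_le_dist_of_mem hgu
      have h2 : Metric.infDist a Uᶜ ≤ Metric.infDist (f u) Uᶜ := hmin hfuU
      have h3 := hfg u
      linarith
    apply Set.Subset.antisymm
    · rintro _ ⟨u, hu, rfl⟩; exact key u hu
    · intro u hu
      have hsymm : f.symm u ∈ U := by
        by_contra hcon
        have h4 : f (f.symm u) ∈ Uᶜ := keyc _ hcon
        rw [Homeomorph.apply_symm_apply] at h4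
        exact h4 hu
      exact ⟨f.symm u, hsymm, f.apply_symm_apply u⟩

end GapAndHelpers


section ActionStructure

variable {X : Type*} [MetricSpace X] [CompactSpace X] {Γ : Type*} [Group Γ]

/-- The main structure theorem for one action: the Steinitz order of `G(Φ)` equals, up to a
positive integer factor, the Steinitz order of the closure of the holonomy group of an
adapted set. -/
theorem action_structure (Φ : Γ →* (X ≃ₜ X)) (hmin : IsMinimalAction Φ)
    (heqc : IsEquicontinuousAction Φ) (x₀ : X) (hd : discriminant Φ x₀ = ⊥)
    (U : Set X) (hU : IsAdaptedSet Φ U) [CompactSpace ↥U] :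
    ∃ d : ℕ, d ≠ 0 ∧
      steinitzOrderAction Φ = SteinitzNum.ofNat d *
        steinitzOrder ↥((holonomyGroup Φ U).topologicalClosure) := by
  classical
  set G : Subgroup (X ≃ₜ X) := profiniteClosure Φ with hG
  have hGc : IsCompact (G : Set (X ≃ₜ X)) := isCompact_profiniteClosure Φ heqc
  haveI : CompactSpace ↥G := isCompact_iff_compactSpace.mp hGc
  obtain ⟨ε₀, hε₀, hgap⟩ := clopen_gap U hU.1 hU.2.1
  obtain ⟨δ₀, hδ₀, hδ₀'⟩ := heqc ε₀ hε₀
  set GU : Subgroup ↥G := adaptedStabilizer G.subtype U with hGU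
  have hmemGU : ∀ a : ↥G, a ∈ GU ↔ (a : X ≃ₜ X) '' U = U := fun a => Iff.rfl
  have hΦmemG : ∀ γ : Γ, Φ γ ∈ G := fun γ =>
    Subgroup.le_topologicalClosure _ ⟨γ, rfl⟩
  have hinv : ∀ (γ : Γ) (x : X), Φ γ⁻¹ (Φ γ x) = x := by
    intro γ x
    rw [map_inv, Homeomorph.inv_eq_symm]
    exact Homeomorph.symm_apply_apply _ _
  -- every element of G carries U to a Γ-translate of U
  have htrans : ∀ a : ↥G, ∃ γ : Γ, (a : X ≃ₜ X) '' U = Φ γ '' U := by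
    intro a
    have hmem : (a : X ≃ₜ X) ∈ closure (Φ.range : Set (X ≃ₜ X)) := by
      have h2 : (a : X ≃ₜ X) ∈ ((Φ.range.topologicalClosure : Subgroup (X ≃ₜ X)) :
          Set (X ≃ₜ X)) := a.2
      rwa [Subgroup.topologicalClosure_coe] at h2
    obtain ⟨b, hb, hdist⟩ := Metric.mem_closure_iff.mp hmem δ₀ hδ₀
    obtain ⟨γ, rfl⟩ := hb
    refine ⟨γ, ?_⟩
    set w : X ≃ₜ X := Φ γ⁻¹ * (a : X ≃ₜ X) with hw
    have hwU : w '' U = U := by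
      apply hgap w (Homeomorph.refl X) _ (by
        have : ((Homeomorph.refl X) : X → X) = id := rfl
        rw [this, Set.image_id])
      intro x
      have h1 : dist ((a : X ≃ₜ X) x) (Φ γ x) < δ₀ :=
        lt_of_le_of_lt (Homeomorph.dist_apply_le _ _ x) hdist
      have h2 := hδ₀' _ _ h1 γ⁻¹
      rw [hinv] at h2
      exact h2
    have ha : (a : X ≃ₜ X) = Φ γ * w := by
      rw [hw, ← mul_assoc, ← map_mul, mul_inv_cancel, map_one, one_mul]
    rw [ha, Homeomorph.mul_image, hwU]
  -- finitely many Γ-translates of U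
  have hcover : (Set.univ : Set X) ⊆ ⋃ γ : Γ, Φ γ '' U := by
    intro x _
    obtain ⟨p, ⟨γ, rfl⟩, hpU⟩ := (hmin x).exists_mem_open hU.2.1.isOpen hU.1
    have : x ∈ Φ γ⁻¹ '' U := ⟨Φ γ x, hpU, hinv γ x⟩
    exact Set.mem_iUnion.mpr ⟨γ⁻¹, this⟩
  obtain ⟨t, ht⟩ := isCompact_univ.elim_finite_subcover (fun γ : Γ => Φ γ '' U)
    (fun γ => (Homeomorph.isOpen_image _).mpr hU.2.1.isOpen) hcover
  have htrfin : (Set.range fun γ : Γ => Φ γ '' U).Finite := by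
    apply Set.Finite.subset ((t.finite_toSet).image (fun γ => Φ γ '' U))
    rintro _ ⟨γ, rfl⟩
    obtain ⟨u, hu⟩ := hU.1
    have : Φ γ u ∈ ⋃ i ∈ t, Φ i '' U := ht (Set.mem_univ _)
    obtain ⟨i, hit, v, hv, hvi⟩ := by
      simpa only [Set.mem_iUnion, Set.mem_image, exists_prop] using this
    have hvU : Φ (i⁻¹ * γ) u = v := by
      rw [map_mul, Homeomorph.mul_apply', ← hvi, hinv]
    have hint : (Φ (i⁻¹ * γ) '' U ∩ U).Nonempty :=
      ⟨v, ⟨u, hu, hvU⟩, hv⟩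
    have heqU : Φ (i⁻¹ * γ) '' U = U := hU.2.2 _ hint
    have : Φ γ '' U = Φ i '' U := by
      have hγ : Φ γ = Φ i * Φ (i⁻¹ * γ) := by
        rw [← map_mul, mul_inv_cancel_left]
      rw [hγ, Homeomorph.mul_image, heqU]
    exact ⟨i, hit, this.symm⟩
  -- the quotient G/GU is finite
  have hresp : ∀ a b : ↥G, (QuotientGroup.leftRel GU) a b →
      ((a : X ≃ₜ X) '' U = (b : X ≃ₜ X) '' U) := by
    intro a b hab
    have hab2 : a⁻¹ * b ∈ GU := QuotientGroup.leftRel_apply.mp hab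
    have h1 : ((a⁻¹ * b : ↥G) : X ≃ₜ X) '' U = U := hab2
    have h2 : ((a⁻¹ * b : ↥G) : X ≃ₜ X) = (a : X ≃ₜ X)⁻¹ * (b : X ≃ₜ X) := rfl
    rw [h2] at h1
    have h3 := congrArg (fun S => (a : X ≃ₜ X) '' S) h1
    change (a : X ≃ₜ X) '' (((a : X ≃ₜ X)⁻¹ * (b : X ≃ₜ X)) '' U) = (a : X ≃ₜ X) '' U at h3
    rw [← Homeomorph.mul_image, ← mul_assoc, mul_inv_cancel, one_mul] at h3
    exact h3.symm
  set F : ↥G ⧸ GU → Set X := fun q => Quotient.liftOn' q (fun a => (a : X ≃ₜ X) '' U) hresp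
    with hF
  have hFinj : Function.Injective F := by
    intro q1 q2
    induction q1 using Quotient.inductionOn'
    induction q2 using Quotient.inductionOn'
    rename_i a b
    intro hab
    have h1 : (a : X ≃ₜ X) '' U = (b : X ≃ₜ X) '' U := hab
    apply Quotient.sound'
    apply QuotientGroup.leftRel_apply.mpr
    show ((a⁻¹ * b : ↥G) : X ≃ₜ X) '' U = U
    have h2 : ((a⁻¹ * b : ↥G) : X ≃ₜ X) = (a : X ≃ₜ X)⁻¹ * (b : X ≃ₜ X) := rfl
    rw [h2, Homeomorph.mul_image, ← h1, ← Homeomorph.mul_image, inv_mul_cancel,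
      Homeomorph.one_image]
  have hFrange : Set.range F ⊆ Set.range fun γ : Γ => Φ γ '' U := by
    rintro _ ⟨q, rfl⟩
    induction q using Quotient.inductionOn'
    rename_i a
    obtain ⟨γ, hγ⟩ := htrans a
    exact ⟨γ, hγ.symm⟩
  have hrangefin : (Set.range F).Finite := htrfin.subset hFrange
  haveI : Finite ↥(Set.range F) := hrangefin.to_subtype
  haveI hquotfin : Finite (↥G ⧸ GU) := by
    apply Finite.of_injective (fun q => (⟨F q, Set.mem_range_self q⟩ : ↥(Set.range F)))
    intro q1 q2 hq
    exact hFinj (congrArg Subtype.val hq)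
  haveI hGUfin : GU.FiniteIndex := GU.finiteIndex_of_finite_quotient
  -- GU is open
  have hGUopen : IsOpen (GU : Set ↥G) := by
    rw [Metric.isOpen_iff]
    intro a ha
    refine ⟨ε₀, hε₀, ?_⟩
    intro b hb
    rw [Metric.mem_ball, Subtype.dist_eq] at hb
    show (b : X ≃ₜ X) '' U = U
    apply hgap (b : X ≃ₜ X) (a : X ≃ₜ X) _ ha
    intro x
    exact lt_of_le_of_lt (Homeomorph.dist_apply_le _ _ x) hb
  -- the restriction homomorphism is injective
  have hrinj : Function.Injective (holonomyHom G.subtype U) := by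
    rw [injective_iff_map_eq_one]
    intro a ha
    have hfix : ∀ x, ∀ hx : x ∈ U, ((a : ↥G) : X ≃ₜ X) x = x := by
      intro x hx
      have h := congrArg (fun k : ↥U ≃ₜ ↥U => ((k ⟨x, hx⟩ : ↥U) : X)) ha
      simpa [holonomyHom_apply_coe] using h
    obtain ⟨p, ⟨γ, rfl⟩, hpU⟩ := (hmin x₀).exists_mem_open hU.2.1.isOpen hU.1
    set A : X ≃ₜ X := ((a : ↥G) : X ≃ₜ X) with hA
    set c : X ≃ₜ X := (Φ γ)⁻¹ * A * Φ γ with hc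
    have hcG : c ∈ profiniteClosure Φ := by
      apply mul_mem (mul_mem (inv_mem (hΦmemG γ)) ?_) (hΦmemG γ)
      exact (a : ↥G).2
    have hcx : c x₀ = x₀ := by
      show ((Φ γ)⁻¹ * A * Φ γ) x₀ = x₀
      rw [Homeomorph.mul_apply', Homeomorph.mul_apply', hfix _ hpU,
        Homeomorph.inv_eq_symm]
      exact Homeomorph.symm_apply_apply _ _
    have hmemdisc : (⟨c, hcG⟩ : ↥(profiniteClosure Φ)) ∈ discriminant Φ x₀ := hcx
    rw [hd, Subgroup.mem_bot] at hmemdisc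
    have hc1 : c = 1 := congrArg Subtype.val hmemdisc
    have hA1 : A = 1 := by
      have h2 : A = Φ γ * c * (Φ γ)⁻¹ := by rw [hc]; group
      rw [h2, hc1, mul_one, mul_inv_cancel]
    apply Subtype.ext
    apply Subtype.ext
    exact hA1
  -- the restriction homomorphism is continuous
  have hrcont : Continuous (holonomyHom G.subtype U) := by
    rw [Metric.continuous_iff]
    intro a ε hε
    refine ⟨ε, hε, ?_⟩
    intro b hb
    rw [Subtype.dist_eq, Subtype.dist_eq] at hb
    rw [Homeomorph.dist_lt_iff' _ _ hε]
    intro u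
    have h1 : dist ((holonomyHom G.subtype U b) u : X) ((holonomyHom G.subtype U a) u : X)
        = dist (((b : ↥G) : X ≃ₜ X) u) (((a : ↥G) : X ≃ₜ X) u) := rfl
    rw [Subtype.dist_eq, h1]
    exact lt_of_le_of_lt (Homeomorph.dist_apply_le _ _ _) hb
  -- compactness of GU
  haveI : CompactSpace ↥GU :=
    isCompact_iff_compactSpace.mp (GU.isClosed_of_isOpen hGUopen).isCompact
  -- identify the image with the closure of the holonomy group
  set K : Subgroup (↥U ≃ₜ ↥U) := holonomyGroup G.subtype U with hK
  have hKrange : (K : Set (↥U ≃ₜ ↥U)) = Set.range (holonomyHom G.subtype U) :=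
    MonoidHom.coe_range _
  have hKclosed : IsClosed (K : Set (↥U ≃ₜ ↥U)) := by
    rw [hKrange]
    exact (isCompact_range hrcont).isClosed
  have hKset : (K : Set (↥U ≃ₜ ↥U)) = closure (holonomyGroup Φ U : Set (↥U ≃ₜ ↥U)) := by
    apply Set.Subset.antisymm
    · rw [hKrange]
      rintro _ ⟨a, rfl⟩
      rw [Metric.mem_closure_iff]
      intro ε hε
      have hmem : (((a : ↥G)) : X ≃ₜ X) ∈ closure (Φ.range : Set (X ≃ₜ X)) := by
        have h2 : (((a : ↥G)) : X ≃ₜ X) ∈ ((Φ.range.topologicalClosure : Subgroup (X ≃ₜ X)) :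
            Set (X ≃ₜ X)) := ((a : ↥G)).2
        rwa [Subgroup.topologicalClosure_coe] at h2
      obtain ⟨b, hb, hdist⟩ := Metric.mem_closure_iff.mp hmem (min ε ε₀)
        (lt_min hε hε₀)
      obtain ⟨γ, rfl⟩ := hb
      have hγU : Φ γ '' U = U := by
        apply hgap (Φ γ) (((a : ↥G)) : X ≃ₜ X) _ a.2
        intro x
        rw [dist_comm]
        exact lt_of_le_of_lt (Homeomorph.dist_apply_le _ _ x)
          (lt_of_lt_of_le hdist (min_le_right _ _))
      refine ⟨holonomyHom Φ U ⟨γ, hγU⟩, ⟨⟨γ, hγU⟩, rfl⟩, ?_⟩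
      rw [Homeomorph.dist_lt_iff' _ _ hε]
      intro u
      rw [Subtype.dist_eq]
      have h1 : dist ((holonomyHom G.subtype U a u : ↥U) : X)
          ((holonomyHom Φ U ⟨γ, hγU⟩ u : ↥U) : X)
          = dist ((((a : ↥G)) : X ≃ₜ X) u) (Φ γ u) := rfl
      rw [h1]
      exact lt_of_le_of_lt (Homeomorph.dist_apply_le _ _ _)
        (lt_of_lt_of_le hdist (min_le_left _ _))
    · apply closure_minimal _ hKclosed
      rintro _ ⟨⟨γ, hγ⟩, rfl⟩
      have hmem2 : Φ γ ∈ G := hΦmemG γ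
      have hstab : (⟨Φ γ, hmem2⟩ : ↥G) ∈ GU := hγ
      refine ⟨⟨⟨Φ γ, hmem2⟩, hstab⟩, ?_⟩
      ext u
      rfl
  -- the group isomorphism with the image
  set e : ↥GU ≃* ↥K := MonoidHom.ofInjective hrinj with he
  have hecont : Continuous e := by
    apply continuous_induced_rng.mpr
    have hcomp : (Subtype.val ∘ (e : ↥GU → ↥K)) =
        fun a => (holonomyHom G.subtype U) a := rfl
    rw [hcomp]
    exact hrcont
  have hesymm : Continuous e.symm := by
    rw [continuous_iff_isClosed]
    intro C hC
    have h1 : (e.symm) ⁻¹' C = (e : ↥GU → ↥K) '' C := by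
      ext y
      constructor
      · intro hy
        exact ⟨e.symm y, hy, e.apply_symm_apply y⟩
      · rintro ⟨x, hx, rfl⟩
        simpa [e.symm_apply_apply] using hx
    rw [h1]
    exact hecont.isClosedMap C hC
  refine ⟨GU.index, hGUfin.index_ne_zero, ?_⟩
  have step1 : steinitzOrderAction Φ = SteinitzNum.ofNat GU.index * steinitzOrder ↥GU :=
    steinitzOrder_eq_index_mul_of_isOpen GU hGUopen hGUfin
  have step2 : steinitzOrder ↥GU = steinitzOrder ↥K :=
    steinitzOrder_congr_of_mulEquiv e hecont hesymm
  have step3 : K = (holonomyGroup Φ U).topologicalClosure := by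
    apply SetLike.ext'
    rw [hKset, Subgroup.topologicalClosure_coe]
  rw [step1, step2, ← step3]

end ActionStructure


section ConjAndMain

/-- Conjugation by a homeomorphism as a group isomorphism of homeomorphism groups. -/
def conjMulEquiv {Y Z : Type*} [TopologicalSpace Y] [TopologicalSpace Z] (h : Y ≃ₜ Z) :
    (Y ≃ₜ Y) ≃* (Z ≃ₜ Z) where
  toFun k := h.symm.trans (k.trans h)
  invFun k := h.trans (k.trans h.symm)
  left_inv k := by
    apply Homeomorph.ext
    intro y
    simp [Homeomorph.trans_apply]
  right_inv k := by
    apply Homeomorph.ext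
    intro z
    simp [Homeomorph.trans_apply]
  map_mul' f g := by
    apply Homeomorph.ext
    intro z
    simp [Homeomorph.trans_apply, Homeomorph.mul_apply']

theorem conjMulEquiv_apply {Y Z : Type*} [TopologicalSpace Y] [TopologicalSpace Z]
    (h : Y ≃ₜ Z) (k : Y ≃ₜ Y) : conjMulEquiv h k = h.symm.trans (k.trans h) := rfl

theorem conj_continuous {Y Z : Type*} [MetricSpace Y] [CompactSpace Y] [MetricSpace Z]
    [CompactSpace Z] (h : Y ≃ₜ Z) :
    Continuous fun k : Y ≃ₜ Y => (h.symm.trans (k.trans h) : Z ≃ₜ Z) := by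
  rw [Metric.continuous_iff]
  intro k₀ ε hε
  obtain ⟨δ, hδ, hδ'⟩ := Metric.uniformContinuous_iff.mp
    (CompactSpace.uniformContinuous_of_continuous h.continuous) ε hε
  refine ⟨δ, hδ, fun k hk => ?_⟩
  rw [Homeomorph.dist_lt_iff' _ _ hε]
  intro z
  have h1 : dist (k (h.symm z)) (k₀ (h.symm z)) < δ :=
    lt_of_le_of_lt (Homeomorph.dist_apply_le _ _ _) hk
  exact hδ' h1

/-- Transport of the Steinitz order along a bicontinuous group isomorphism matching two
subgroups. -/
theorem steinitzOrder_congr_restrict {A B : Type*} [Group A] [Group B] [TopologicalSpace A]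
    [TopologicalSpace B] (e : A ≃* B) (hc : Continuous e) (hc' : Continuous e.symm)
    (S : Subgroup A) (T : Subgroup B) (hST : ∀ x, x ∈ S ↔ e x ∈ T) :
    steinitzOrder ↥S = steinitzOrder ↥T := by
  have hTS : ∀ y : B, y ∈ T ↔ e.symm y ∈ S := by
    intro y
    rw [hST (e.symm y), e.apply_symm_apply]
  set e' : ↥S ≃* ↥T :=
    { toFun := fun x => ⟨e (x : A), (hST (x : A)).mp x.2⟩
      invFun := fun y => ⟨e.symm (y : B), (hTS (y : B)).mp y.2⟩
      left_inv := fun x => Subtype.ext (e.symm_apply_apply (x : A))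
      right_inv := fun y => Subtype.ext (e.apply_symm_apply (y : B))
      map_mul' := fun x y => Subtype.ext (map_mul e (x : A) (y : A)) } with he'
  apply steinitzOrder_congr_of_mulEquiv e'
  · apply continuous_induced_rng.mpr
    have h1 : (Subtype.val ∘ (e' : ↥S → ↥T)) = fun x : ↥S => e (x : A) := rfl
    rw [h1]
    exact hc.comp continuous_subtype_val
  · apply continuous_induced_rng.mpr
    have h1 : (Subtype.val ∘ (e'.symm : ↥T → ↥S)) = fun y : ↥T => e.symm (y : B) := rfl
    rw [h1]
    exact hc'.comp continuous_subtype_val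

end ConjAndMain

/-- For return equivalent minimal equicontinuous Cantor actions with
trivial discriminant groups, the Steinitz orders `Π[G(Φ)]` are asymptotically
equivalent. -/
theorem steinitzOrder_asympEquiv_of_returnEquivalent_of_trivial_discriminant
    {X₁ : Type*} [MetricSpace X₁] [CompactSpace X₁] [Nonempty X₁] [TotallyDisconnectedSpace X₁]
    (hperf₁ : Perfect (Set.univ : Set X₁))
    {Γ₁ : Type*} [Group Γ₁] [Countable Γ₁] (Φ₁ : Γ₁ →* (X₁ ≃ₜ X₁))
    (hmin₁ : IsMinimalAction Φ₁) (heqc₁ : IsEquicontinuousAction Φ₁)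
    {X₂ : Type*} [MetricSpace X₂] [CompactSpace X₂] [Nonempty X₂] [TotallyDisconnectedSpace X₂]
    (hperf₂ : Perfect (Set.univ : Set X₂))
    {Γ₂ : Type*} [Group Γ₂] [Countable Γ₂] (Φ₂ : Γ₂ →* (X₂ ≃ₜ X₂))
    (hmin₂ : IsMinimalAction Φ₂) (heqc₂ : IsEquicontinuousAction Φ₂)
    (hre : ReturnEquivalent Φ₁ Φ₂) (x₁ : X₁) (x₂ : X₂)
    (hd₁ : discriminant Φ₁ x₁ = ⊥) (hd₂ : discriminant Φ₂ x₂ = ⊥) :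
    SteinitzNum.AsympEquiv (steinitzOrderAction Φ₁) (steinitzOrderAction Φ₂) := by
  obtain ⟨U₁, U₂, hU₁, hU₂, h, θ, hθ⟩ := hre
  haveI : CompactSpace ↥U₁ := isCompact_iff_compactSpace.mp hU₁.2.1.isClosed.isCompact
  haveI : CompactSpace ↥U₂ := isCompact_iff_compactSpace.mp hU₂.2.1.isClosed.isCompact
  obtain ⟨d₁, hd₁0, hstep₁⟩ := action_structure Φ₁ hmin₁ heqc₁ x₁ hd₁ U₁ hU₁
  obtain ⟨d₂, hd₂0, hstep₂⟩ := action_structure Φ₂ hmin₂ heqc₂ x₂ hd₂ U₂ hU₂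
  set c : (↥U₁ ≃ₜ ↥U₁) ≃* (↥U₂ ≃ₜ ↥U₂) := conjMulEquiv h with hc
  have hccont : Continuous c := conj_continuous h
  have hcsymm : Continuous c.symm := by
    have h1 : (c.symm : (↥U₂ ≃ₜ ↥U₂) → (↥U₁ ≃ₜ ↥U₁)) =
        fun k : ↥U₂ ≃ₜ ↥U₂ => ((h.symm).symm.trans (k.trans h.symm) : ↥U₁ ≃ₜ ↥U₁) := by
      funext k
      apply Homeomorph.ext
      intro y
      rfl
    rw [h1]
    exact conj_continuous h.symm
  -- the conjugation carries one holonomy group to the other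
  have hHmap : ∀ x : ↥U₁ ≃ₜ ↥U₁,
      x ∈ holonomyGroup Φ₁ U₁ ↔ c x ∈ holonomyGroup Φ₂ U₂ := by
    intro x
    constructor
    · intro hx
      have h1 := hθ ⟨x, hx⟩
      have h2 := (θ ⟨x, hx⟩).2
      have h3 : c x = (θ ⟨x, hx⟩ : ↥U₂ ≃ₜ ↥U₂) := by rw [h1]; rfl
      rw [h3]
      exact h2
    · intro hx
      set k := θ.symm ⟨c x, hx⟩ with hk
      have h2 := hθ k
      have h3 : (θ k : ↥U₂ ≃ₜ ↥U₂) = c x := by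
        rw [hk, θ.apply_symm_apply]
      have h4 : c x = c (k : ↥U₁ ≃ₜ ↥U₁) := by
        rw [← h3, h2]; rfl
      have h5 : x = (k : ↥U₁ ≃ₜ ↥U₁) := c.injective h4
      rw [h5]
      exact (k : holonomyGroup Φ₁ U₁).2
  -- upgrade to the closures
  set cHomeo : (↥U₁ ≃ₜ ↥U₁) ≃ₜ (↥U₂ ≃ₜ ↥U₂) :=
    { toEquiv := c.toEquiv, continuous_toFun := hccont, continuous_invFun := hcsymm }
    with hcH
  have hcHc : (cHomeo : (↥U₁ ≃ₜ ↥U₁) → (↥U₂ ≃ₜ ↥U₂)) = c := rfl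
  have himg : (cHomeo : (↥U₁ ≃ₜ ↥U₁) → (↥U₂ ≃ₜ ↥U₂)) '' (holonomyGroup Φ₁ U₁ : Set _)
      = (holonomyGroup Φ₂ U₂ : Set _) := by
    ext y
    constructor
    · rintro ⟨x, hx, rfl⟩
      exact (hHmap x).mp hx
    · intro hy
      refine ⟨c.symm y, ?_, ?_⟩
      · have hy' : c (c.symm y) ∈ holonomyGroup Φ₂ U₂ := by
          rw [c.apply_symm_apply]; exact hy
        exact (hHmap (c.symm y)).mpr hy'
      · rw [hcHc]
        exact c.apply_symm_apply y
  have hCmap : ∀ x : ↥U₁ ≃ₜ ↥U₁,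
      x ∈ (holonomyGroup Φ₁ U₁).topologicalClosure ↔
        c x ∈ (holonomyGroup Φ₂ U₂).topologicalClosure := by
    intro x
    have hset₁ : ((holonomyGroup Φ₁ U₁).topologicalClosure : Set (↥U₁ ≃ₜ ↥U₁))
        = closure (holonomyGroup Φ₁ U₁ : Set _) := Subgroup.topologicalClosure_coe
    have hset₂ : ((holonomyGroup Φ₂ U₂).topologicalClosure : Set (↥U₂ ≃ₜ ↥U₂))
        = closure (holonomyGroup Φ₂ U₂ : Set _) := Subgroup.topologicalClosure_coe
    constructor
    · intro hx
      have hx' : x ∈ closure (holonomyGroup Φ₁ U₁ : Set _) := by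
        rw [← hset₁]; exact hx
      have h1 : c x ∈ (cHomeo : _ → _) '' closure (holonomyGroup Φ₁ U₁ : Set _) :=
        ⟨x, hx', by rw [hcHc]⟩
      rw [cHomeo.image_closure, himg] at h1
      show c x ∈ ((holonomyGroup Φ₂ U₂).topologicalClosure : Set _)
      rw [hset₂]
      exact h1
    · intro hx
      have hx' : c x ∈ closure (holonomyGroup Φ₂ U₂ : Set _) := by
        rw [← hset₂]; exact hx
      rw [← himg, ← cHomeo.image_closure] at hx'
      obtain ⟨x', hx'', hxx⟩ := hx'
      have hxeq : x' = x := by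
        apply cHomeo.injective
        rw [hxx, hcHc]
      show x ∈ ((holonomyGroup Φ₁ U₁).topologicalClosure : Set _)
      rw [hset₁, ← hxeq]
      exact hx''
  have hmid : steinitzOrder ↥((holonomyGroup Φ₁ U₁).topologicalClosure) =
      steinitzOrder ↥((holonomyGroup Φ₂ U₂).topologicalClosure) :=
    steinitzOrder_congr_restrict c hccont hcsymm _ _ hCmap
  refine ⟨d₂, d₁, Nat.pos_of_ne_zero hd₂0, Nat.pos_of_ne_zero hd₁0, ?_⟩
  rw [hstep₁, hstep₂, hmid]
  funext p
  show SteinitzNum.ofNat d₂ p + (SteinitzNum.ofNat d₁ p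
      + steinitzOrder ↥((holonomyGroup Φ₂ U₂).topologicalClosure) p)
    = SteinitzNum.ofNat d₁ p + (SteinitzNum.ofNat d₂ p
      + steinitzOrder ↥((holonomyGroup Φ₂ U₂).topologicalClosure) p)
  exact add_left_comm _ _ _

end SteinitzAux
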